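/- Let f : [0,1] → [0,1]² be continuous with f(0) = (0,0), f(1) = (1,1), and let mod : ℚ_{>0} → ℚ_{>0} be nondecreasing such that for all rational γ > 0 and all a, b ∈ [0,1], |a - b| < mod(γ) implies ‖f(a) - f(b)‖ < γ. Let s ∈ ℚ, s > 0, and set ε_k := 2^{-k-1}·s. Let i ≥ 1 and let a_i, b_i, a_{i+1}, r_{i-1}, s_i, r_i be rationals satisfying: 0 < a_i < 1; cl B(f(a_i), s) ⊆ (0,1)²; s - Σ_{k=1}^{i-1} ε_k ≤ r_{i-1} ≤ s; with t_i := sup{ b ∈ ℚ : a_i < b ≤ 1 and f([a_i, b]) ⊆ B(f(a_i), r_{i-1}) }: a_i < b_i and t_i - mod(ε_i) < b_i < t_i; 0 < s_i < r_{i-1} and f([a_i, b_i]) ⊆ B(f(a_i), s_i); t_i - mod((r_{i-1} - s_i)/2) < a_{i+1} < t_i; and s_i < r_i < (s_i + r_{i-1})/2. Then: (1) r_i < r_{i-1}; (2) s - Σ_{k=1}^{i} ε_k < s_i; (3) f([a_i, b_i]) ⊆ B(f(a_i), r_i); (4) f([b_i, a_{i+1}]) ⊆ B(f(a_{i+1}),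 s/2); (5) r_i < ‖f(a_i) - f(a_{i+1})‖ < 3s/2; (6) a_{i+1} ≥ a_i + mod(s/2). -/

import Mathlib

open Set

noncomputable section

/-- The Euclidean plane. -/
abbrev E2 := EuclideanSpace ℝ (Fin 2)

/-- The point `(x, y)` of the Euclidean plane. -/
def pt (x y : ℝ) : E2 := WithLp.toLp 2 ![x, y]

/-- The closed unit square `[0,1]²`. -/
def unitSq : Set E2 := {p | p 0 ∈ Icc (0:ℝ) 1 ∧ p 1 ∈ Icc (0:ℝ) 1}

/-- The open unit square `(0,1)²`. -/
def openUnitSq : Set E2 := {p | p 0 ∈ Ioo (0:ℝ) 1 ∧ p 1 ∈ Ioo (0:ℝ) 1}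

/-- `sup { b ∈ ℚ : a < b ≤ 1 and f([a,b]) ⊆ B(f(a), r) }`. -/
def leaveTime (f : ℝ → E2) (a r : ℝ) : ℝ :=
  sSup {b : ℝ | (∃ q : ℚ, (q:ℝ) = b) ∧ a < b ∧ b ≤ 1 ∧
    MapsTo f (Icc a b) (Metric.ball (f a) r)}

lemma sum_eps (s : ℚ) (m : ℕ) :
    ∑ k ∈ Finset.Icc 1 m, s / 2 ^ (k+1) = s/2 - s/2^(m+1) := by
  induction m with
  | zero => simp
  | succ n ih =>
    rw [Finset.sum_Icc_succ_top (by omega : 1 ≤ n+1), ih]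
    ring

/-- One step of the chain-of-balls construction: properties of `aᵢ, bᵢ, aᵢ₊₁, rᵢ₋₁, sᵢ, rᵢ`. -/
theorem chain_step (f : ℝ → E2)
    (hfc : ContinuousOn f (Icc 0 1)) (hfm : MapsTo f (Icc 0 1) unitSq)
    (hf0 : f 0 = pt 0 0) (hf1 : f 1 = pt 1 1)
    (mod : ℚ → ℚ)
    (hmodpos : ∀ γ : ℚ, 0 < γ → 0 < mod γ)
    (hmodmono : ∀ γ δ : ℚ, 0 < γ → γ ≤ δ → mod γ ≤ mod δ)
    (hmod : ∀ γ : ℚ, 0 < γ → ∀ x ∈ Icc (0:ℝ) 1, ∀ y ∈ Icc (0:ℝ) 1,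
      |x - y| < (mod γ : ℝ) → ‖f x - f y‖ < γ)
    (s : ℚ) (hs : 0 < s)
    (i : ℕ) (hi : 1 ≤ i)
    (ai bi ai1 rp si ri : ℚ)
    (hai : (ai:ℝ) ∈ Ioo (0:ℝ) 1)
    (hball : closure (Metric.ball (f ai) s) ⊆ openUnitSq)
    (hrp1 : s - ∑ k ∈ Finset.Icc 1 (i-1), s / 2 ^ (k+1) ≤ rp) (hrp2 : rp ≤ s)
    (hbi1 : ai < bi)
    (hbi2 : leaveTime f ai rp - (mod (s / 2 ^ (i+1)) : ℝ) < bi)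
    (hbi3 : (bi:ℝ) < leaveTime f ai rp)
    (hsi1 : 0 < si) (hsi2 : si < rp)
    (hsi3 : MapsTo f (Icc (ai:ℝ) bi) (Metric.ball (f ai) si))
    (hai11 : leaveTime f ai rp - (mod ((rp - si)/2) : ℝ) < ai1)
    (hai12 : (ai1:ℝ) < leaveTime f ai rp)
    (hri1 : si < ri) (hri2 : ri < (si + rp)/2) :
    ri < rp ∧
    s - ∑ k ∈ Finset.Icc 1 i, s / 2 ^ (k+1) < si ∧
    MapsTo f (Icc (ai:ℝ) bi) (Metric.ball (f ai) ri) ∧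
    MapsTo f (Icc (bi:ℝ) ai1) (Metric.ball (f ai1) ((s:ℝ)/2)) ∧
    ((ri:ℝ) < ‖f ai - f ai1‖ ∧ ‖f ai - f ai1‖ < 3*(s:ℝ)/2) ∧
    (ai:ℝ) + (mod (s/2) : ℝ) ≤ ai1 := by
  have hsR : (0:ℝ) < s := by exact_mod_cast hs
  have hai0 : (0:ℝ) < ai := hai.1
  have hai1R : (ai:ℝ) < 1 := hai.2
  -- lower bound on rp
  have hrp_lb : s/2 + s/2^i ≤ rp := by
    have h := hrp1
    rw [sum_eps] at h
    have hi1 : i - 1 + 1 = i := by omega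
    rw [hi1] at h
    linarith
  have hεpos : (0:ℚ) < s / 2^(i+1) := by positivity
  have hrp_pos : (0:ℚ) < rp := by
    have h : (0:ℚ) < s/2 + s/2^i := by positivity
    linarith
  have hrpR : (0:ℝ) < rp := by exact_mod_cast hrp_pos
  have hrpsR : (rp:ℝ) ≤ s := by exact_mod_cast hrp2
  -- the set defining the leave time
  set S : Set ℝ := {b : ℝ | (∃ q : ℚ, (q:ℝ) = b) ∧ (ai:ℝ) < b ∧ b ≤ 1 ∧
    MapsTo f (Icc (ai:ℝ) b) (Metric.ball (f ai) rp)} with hSdef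
  set t := leaveTime f (ai:ℝ) (rp:ℝ) with htdef
  have htS : t = sSup S := htdef
  have hS_bdd : BddAbove S := ⟨1, fun b hb => hb.2.2.1⟩
  -- f 1 is far from f ai
  have hf1_dist : (s:ℝ) ≤ dist (f 1) (f ai) := by
    by_contra h
    push_neg at h
    have h1 : f 1 ∈ Metric.ball (f (ai:ℝ)) (s:ℝ) := h
    have h2 : f 1 ∈ openUnitSq := hball (subset_closure h1)
    rw [hf1] at h2
    norm_num [openUnitSq, pt] at h2
  have hmodrp_pos : (0:ℚ) < mod rp := hmodpos _ hrp_pos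
  have hmodrpR : (0:ℝ) < mod rp := by exact_mod_cast hmodrp_pos
  have hIai : (ai:ℝ) ∈ Icc (0:ℝ) 1 := ⟨le_of_lt hai0, le_of_lt hai1R⟩
  have hI1 : (1:ℝ) ∈ Icc (0:ℝ) 1 := ⟨by norm_num, le_refl 1⟩
  have hmodrp_le : (mod rp : ℝ) ≤ 1 - ai := by
    by_contra h
    push_neg at h
    have habs : |(1:ℝ) - ai| < mod rp := by
      rw [abs_of_nonneg (by linarith)]
      linarith
    have h2 := hmod rp hrp_pos 1 hI1 ai hIai habs
    rw [← dist_eq_norm] at h2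
    linarith [hf1_dist]
  -- small rationals above ai are in S
  have hmemS : ∀ q : ℚ, (ai:ℝ) < q → (q:ℝ) < ai + mod rp → (q:ℝ) ∈ S := by
    intro q h1 h2
    refine ⟨⟨q, rfl⟩, h1, by linarith, ?_⟩
    intro x hx
    have hx0 : x ∈ Icc (0:ℝ) 1 := ⟨by linarith [hx.1], by linarith [hx.2]⟩
    have habs : |x - (ai:ℝ)| < mod rp := by
      rw [abs_of_nonneg (by linarith [hx.1])]
      linarith [hx.2]
    have h3 := hmod rp hrp_pos x hx0 ai hIai habs
    rw [Metric.mem_ball, dist_eq_norm]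
    exact h3
  have hS_ne : S.Nonempty := by
    obtain ⟨q, hq1, hq2⟩ := exists_rat_btwn (show (ai:ℝ) < ai + mod rp by linarith)
    exact ⟨q, hmemS q hq1 hq2⟩
  have ht_le1 : t ≤ 1 := by
    rw [htS]; exact csSup_le hS_ne fun b hb => hb.2.2.1
  have hbiR : (ai:ℝ) < bi := by exact_mod_cast hbi1
  have hai_lt_t : (ai:ℝ) < t := lt_trans hbiR hbi3
  have ht_lb : (ai:ℝ) + mod rp ≤ t := by
    by_contra h
    push_neg at h
    obtain ⟨q, hq1, hq2⟩ := exists_rat_btwn h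
    have hqS := hmemS q (lt_trans hai_lt_t hq1) hq2
    have : (q:ℝ) ≤ t := by rw [htS]; exact le_csSup hS_bdd hqS
    linarith
  -- the escape lemma
  have key : ∀ γ : ℚ, 0 < γ → ∀ c : ℚ, t - (mod γ : ℝ) < c → (c:ℝ) < t →
      ∃ x : ℝ, x ∈ Icc (0:ℝ) 1 ∧ (rp:ℝ) ≤ ‖f x - f ai‖ ∧ |x - (c:ℝ)| < (mod γ : ℝ) := by
    intro γ hγ c hc1 hc2
    have hδ : (0:ℝ) < mod γ := by exact_mod_cast hmodpos γ hγ
    by_cases hcase : (c:ℝ) + mod γ ≤ 1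
    · have hlt : max t (c:ℝ) < c + mod γ := max_lt (by linarith) (by linarith)
      obtain ⟨b', hb1, hb2⟩ := exists_rat_btwn hlt
      have hbt : t < b' := lt_of_le_of_lt (le_max_left _ _) hb1
      have hbc : (c:ℝ) < b' := lt_of_le_of_lt (le_max_right _ _) hb1
      have hb'_not : (b':ℝ) ∉ S := by
        intro hmem
        have : (b':ℝ) ≤ t := by rw [htS]; exact le_csSup hS_bdd hmem
        linarith
      have hb'_ai : (ai:ℝ) < b' := lt_trans hai_lt_t hbt
      have hb'_le1 : (b':ℝ) ≤ 1 := by linarith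
      have hnm : ∃ x ∈ Icc (ai:ℝ) (b':ℝ), f x ∉ Metric.ball (f (ai:ℝ)) (rp:ℝ) := by
        by_contra hno
        push_neg at hno
        exact hb'_not ⟨⟨b', rfl⟩, hb'_ai, hb'_le1, hno⟩
      obtain ⟨x, hx, hfx⟩ := hnm
      rw [Metric.mem_ball, dist_eq_norm] at hfx
      have hxrp : (rp:ℝ) ≤ ‖f x - f ai‖ := not_lt.mp hfx
      have hxc : (c:ℝ) < x := by
        by_contra hxc
        push_neg at hxc
        have hc2' : (c:ℝ) < sSup S := by rw [← htS]; exact hc2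
        obtain ⟨b, hbS, hcb⟩ := exists_lt_of_lt_csSup hS_ne hc2'
        have hmem : f x ∈ Metric.ball (f (ai:ℝ)) (rp:ℝ) :=
          hbS.2.2.2 ⟨hx.1, by linarith⟩
        rw [Metric.mem_ball, dist_eq_norm] at hmem
        linarith
      refine ⟨x, ⟨by linarith [hx.1], by linarith [hx.2]⟩, hxrp, ?_⟩
      rw [abs_of_nonneg (by linarith)]
      linarith [hx.2]
    · push_neg at hcase
      refine ⟨1, hI1, ?_, ?_⟩
      · rw [← dist_eq_norm]
        linarith [hf1_dist]
      · rw [abs_of_nonneg (by linarith [ht_le1] : (0:ℝ) ≤ 1 - c)]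
        linarith
  -- basic memberships
  have hbi_mem : (bi:ℝ) ∈ Icc (0:ℝ) 1 :=
    ⟨le_of_lt (lt_trans hai0 hbiR), le_of_lt (lt_of_lt_of_le hbi3 ht_le1)⟩
  -- conclusion (2) core: si > rp - εᵢ
  obtain ⟨x, hx01, hxrp, hxbi⟩ := key (s/2^(i+1)) hεpos bi hbi2 hbi3
  have hfxbi : ‖f x - f (bi:ℝ)‖ < ((s/2^(i+1) : ℚ) : ℝ) :=
    hmod _ hεpos x hx01 bi hbi_mem hxbi
  have hfbiai : ‖f (bi:ℝ) - f (ai:ℝ)‖ < si := by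
    have h := hsi3 ⟨le_of_lt hbiR, le_refl _⟩
    rw [Metric.mem_ball, dist_eq_norm] at h
    exact h
  have htri : ‖f x - f (ai:ℝ)‖ ≤ ‖f x - f (bi:ℝ)‖ + ‖f (bi:ℝ) - f (ai:ℝ)‖ := by
    simpa [dist_eq_norm] using dist_triangle (f x) (f (bi:ℝ)) (f (ai:ℝ))
  have hsi_lb : rp - s/2^(i+1) < si := by
    have hR : ((rp - s/2^(i+1) : ℚ) : ℝ) < ((si : ℚ) : ℝ) := by
      push_cast at hfxbi ⊢
      linarith
    exact_mod_cast hR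
  have hconc2 : s - ∑ k ∈ Finset.Icc 1 i, s / 2 ^ (k+1) < si := by
    rw [sum_eps]
    have h2i : (2:ℚ)^(i+1) = 2^i * 2 := pow_succ 2 i
    have hhalf : s / 2^(i+1) = s / 2^i / 2 := by rw [h2i, div_div]
    linarith [hrp_lb, hsi_lb]
  -- conclusion (1)
  have hconc1 : ri < rp := by linarith
  -- conclusion (3)
  have hconc3 : MapsTo f (Icc (ai:ℝ) bi) (Metric.ball (f ai) ri) :=
    hsi3.mono_right (Metric.ball_subset_ball (by exact_mod_cast le_of_lt hri1))
  -- gap facts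
  have hgap_pos : (0:ℚ) < (rp - si)/2 := by linarith
  have hgap_lt : (rp - si)/2 ≤ s/2^(i+1) := by linarith
  have hmodgap : (mod ((rp-si)/2) : ℝ) ≤ (mod (s/2^(i+1)) : ℝ) := by
    exact_mod_cast hmodmono _ _ hgap_pos hgap_lt
  have hmodgap_rp : (mod ((rp-si)/2) : ℝ) ≤ (mod rp : ℝ) := by
    exact_mod_cast hmodmono _ _ hgap_pos (by linarith)
  have hai1_gt_ai : (ai:ℝ) < ai1 := by linarith [hai11, ht_lb, hmodgap_rp]
  have hai1_mem : (ai1:ℝ) ∈ Icc (0:ℝ) 1 :=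
    ⟨by linarith, by linarith [hai12, ht_le1]⟩
  have hmodεR : (0:ℝ) < (mod (s/2^(i+1)) : ℝ) := by exact_mod_cast hmodpos _ hεpos
  have hε_le_half : ((s/2^(i+1) : ℚ) : ℝ) ≤ (s:ℝ)/4 := by
    have hq : s/2^(i+1) ≤ s/4 := by
      have h4 : (4:ℚ) ≤ 2^(i+1) := by
        calc (4:ℚ) = 2^2 := by norm_num
        _ ≤ 2^(i+1) := pow_le_pow_right₀ (by norm_num) (by omega)
      gcongr
    exact_mod_cast hq
  -- conclusion (4)
  have hconc4 : MapsTo f (Icc (bi:ℝ) ai1) (Metric.ball (f ai1) ((s:ℝ)/2)) := by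
    intro x' hx'
    have hx'01 : x' ∈ Icc (0:ℝ) 1 := ⟨le_trans hbi_mem.1 hx'.1, le_trans hx'.2 hai1_mem.2⟩
    have habs : |x' - (ai1:ℝ)| < (mod (s/2^(i+1)) : ℝ) := by
      rw [abs_of_nonpos (by linarith [hx'.2])]
      linarith [hbi2, hai12, hx'.1]
    have hn := hmod _ hεpos x' hx'01 ai1 hai1_mem habs
    rw [Metric.mem_ball, dist_eq_norm]
    linarith [hn, hε_le_half, hsR]
  -- conclusion (5)
  obtain ⟨y, hy01, hyrp, hyai1⟩ := key ((rp - si)/2) hgap_pos ai1 hai11 hai12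
  have hfyai1 : ‖f y - f (ai1:ℝ)‖ < (((rp - si)/2 : ℚ) : ℝ) :=
    hmod _ hgap_pos y hy01 ai1 hai1_mem hyai1
  have htri2 : ‖f y - f (ai:ℝ)‖ ≤ ‖f y - f (ai1:ℝ)‖ + ‖f (ai1:ℝ) - f (ai:ℝ)‖ := by
    simpa [dist_eq_norm] using dist_triangle (f y) (f (ai1:ℝ)) (f (ai:ℝ))
  have hrev : ‖f (ai1:ℝ) - f (ai:ℝ)‖ = ‖f (ai:ℝ) - f (ai1:ℝ)‖ := norm_sub_rev _ _
  have hlow : ((rp:ℝ) + si)/2 < ‖f (ai:ℝ) - f (ai1:ℝ)‖ := by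
    push_cast at hfyai1
    linarith [hyrp, htri2, hrev]
  have hconc5a : (ri:ℝ) < ‖f (ai:ℝ) - f (ai1:ℝ)‖ := by
    have hR : (ri:ℝ) < ((si:ℝ) + rp)/2 := by exact_mod_cast hri2
    linarith
  have hbiai1 : ‖f (bi:ℝ) - f (ai1:ℝ)‖ < ((s/2^(i+1) : ℚ) : ℝ) := by
    apply hmod _ hεpos bi hbi_mem ai1 hai1_mem
    rw [abs_lt]
    constructor
    · linarith [hai11, hbi2, hmodgap]
    · linarith [hbi3, hai11, hmodgap]
  have hconc5b : ‖f (ai:ℝ) - f (ai1:ℝ)‖ < 3*(s:ℝ)/2 := by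
    have htri3 : ‖f (ai:ℝ) - f (ai1:ℝ)‖ ≤ ‖f (ai:ℝ) - f (bi:ℝ)‖ + ‖f (bi:ℝ) - f (ai1:ℝ)‖ := by
      simpa [dist_eq_norm] using dist_triangle (f (ai:ℝ)) (f (bi:ℝ)) (f (ai1:ℝ))
    have hrev2 : ‖f (ai:ℝ) - f (bi:ℝ)‖ = ‖f (bi:ℝ) - f (ai:ℝ)‖ := norm_sub_rev _ _
    have hsiR : (si:ℝ) ≤ s := by
      exact_mod_cast le_trans (le_of_lt hsi2) hrp2
    linarith [hfbiai, hbiai1, hε_le_half, hsR]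
  -- conclusion (6)
  have hs2_lb : (s:ℝ)/2 < ((rp:ℝ) + si)/2 := by
    have h2i : (2:ℚ)^(i+1) = 2^i * 2 := pow_succ 2 i
    have hhalf : s / 2^(i+1) = s / 2^i / 2 := by rw [h2i, div_div]
    have hp : (0:ℚ) < s/2^i := by positivity
    have hq : s/2 < (rp + si)/2 := by linarith [hrp_lb, hsi_lb]
    exact_mod_cast hq
  have hs2pos : (0:ℚ) < s/2 := by linarith
  have hconc6 : (ai:ℝ) + (mod (s/2) : ℝ) ≤ ai1 := by
    by_contra h
    push_neg at h
    have habs : |(ai:ℝ) - ai1| < (mod (s/2) : ℝ) := by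
      rw [abs_of_nonpos (by linarith)]
      linarith
    have hlt := hmod (s/2) hs2pos ai hIai ai1 hai1_mem habs
    push_cast at hlt
    linarith [hlow, hs2_lb]
  exact ⟨hconc1, hconc2, hconc3, hconc4, ⟨hconc5a, hconc5b⟩, hconc6⟩
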